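/- Let n ≥ 4 be an integer and let M = (E, r) and M' = (E', r') be finite matroids on disjoint ground sets, each satisfying the n-th Kinser inequality for every family of n subsets of its ground set. Then the direct sum M ⊕ M' satisfies the n-th Kinser inequality for every family of n subsets of E ∪ E'. In other words, the Kinser class K_n is closed under direct sums. -/

import Mathlib

open Finset

universe u v

namespace Matroid

variable {α : Type*}

/-- The rank of a set in a matroid: the cardinality of a largest independent subset. -/
noncomputable def rnk (M : Matroid α) (X : Set α) : ℕ :=
  sSup {n : ℕ | ∃ I, M.Indep I ∧ I ⊆ X ∧ I.ncard = n}

/-- The `n`-th Kinser inequality for the family `X 1, …, X n`. -/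
def KinserIneq (M : Matroid α) (n : ℕ) (X : ℕ → Set α) : Prop :=
  (∑ i ∈ Finset.Icc 3 n, M.rnk (X i)) + M.rnk (X 1 ∪ X 2) + M.rnk (X 1 ∪ X 3 ∪ X n)
      + ∑ i ∈ Finset.Icc 4 n, M.rnk (X 2 ∪ X (i - 1) ∪ X i)
    ≤ M.rnk (X 1 ∪ X 3) + M.rnk (X 1 ∪ X n)
      + (∑ i ∈ Finset.Icc 3 n, M.rnk (X 2 ∪ X i))
      + ∑ i ∈ Finset.Icc 4 n, M.rnk (X (i - 1) ∪ X i)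

/-- `M` lies in the Kinser class `K n`: the `n`-th Kinser inequality holds for every
family of `n` subsets of the ground set. -/
def MemKinserClass (M : Matroid α) (n : ℕ) : Prop :=
  ∀ X : ℕ → Set α, (∀ i ∈ Finset.Icc 1 n, X i ⊆ M.E) → M.KinserIneq n X

/-- `M` is (isomorphic to) the matroid of linear dependence of a family of vectors of a
vector space over `𝔽`. -/
def IsRepOver {α : Type u} (M : Matroid α) (𝔽 : Type v) [Field 𝔽] : Prop :=
  ∃ (W : Type (max u v)) (_ : AddCommGroup W) (_ : Module 𝔽 W) (φ : α → W),
    ∀ I : Set α, M.Indep I ↔ I ⊆ M.E ∧ LinearIndependent 𝔽 (fun x : I => φ x.1)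

/-- Deletion of a set of elements from a matroid. -/
def del (M : Matroid α) (D : Set α) : Matroid α := M ↾ (M.E \ D)

/-- Contraction of a set of elements in a matroid. -/
def con (M : Matroid α) (C : Set α) : Matroid α := (M✶ ↾ (M✶.E \ C))✶

/-- `N` is a minor of `M`: it is obtained from `M` by contractions and deletions. -/
def IsMinorOf (N M : Matroid α) : Prop :=
  ∃ C D : Set α, C ⊆ M.E ∧ D ⊆ M.E ∧ Disjoint C D ∧ N = (M.con C).del D

/-- `N` is a proper minor of `M`: at least one element is deleted or contracted. -/
def IsProperMinorOf (N M : Matroid α) : Prop :=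
  ∃ C D : Set α, C ⊆ M.E ∧ D ⊆ M.E ∧ Disjoint C D ∧ (C ∪ D).Nonempty ∧
    N = (M.con C).del D

/-- A matroid isomorphism: a bijection of ground sets preserving independence. -/
def IsIsoTo {β : Type*} (M : Matroid α) (N : Matroid β) : Prop :=
  ∃ f : α → β, Set.BijOn f M.E N.E ∧ ∀ I ⊆ M.E, (M.Indep I ↔ N.Indep (f '' I))

/-- The Ingleton inequality (the 4th Kinser inequality) for four subsets. -/
def IngletonIneq (M : Matroid α) (X₁ X₂ X₃ X₄ : Set α) : Prop :=
  M.rnk X₃ + M.rnk X₄ + M.rnk (X₁ ∪ X₂) + M.rnk (X₁ ∪ X₃ ∪ X₄) + M.rnk (X₂ ∪ X₃ ∪ X₄)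
    ≤ M.rnk (X₁ ∪ X₃) + M.rnk (X₁ ∪ X₄) + M.rnk (X₂ ∪ X₃) + M.rnk (X₂ ∪ X₄)
      + M.rnk (X₃ ∪ X₄)

end Matroid

namespace Matroid

lemma rnk_eq_of_basis' {α : Type*} (M : Matroid α) [M.Finite] {I X : Set α}
    (hI : M.IsBasis' I X) : M.rnk X = I.ncard := by
  have hIbase : (M ↾ X).IsBase I := isBase_restrict_iff'.2 hI
  have hbound : ∀ m ∈ {n : ℕ | ∃ J, M.Indep J ∧ J ⊆ X ∧ J.ncard = n}, m ≤ I.ncard := by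
    rintro m ⟨J, hJ, hJX, rfl⟩
    have hJ' : (M ↾ X).Indep J := restrict_indep_iff.2 ⟨hJ, hJX⟩
    obtain ⟨B, hB, hJB⟩ := hJ'.exists_isBase_superset
    have hBfin : B.Finite := M.set_finite B (hB.indep.of_restrict.subset_ground)
    calc J.ncard ≤ B.ncard := Set.ncard_le_ncard hJB hBfin
      _ = I.ncard := hB.ncard_eq_ncard_of_isBase hIbase
  apply le_antisymm
  · exact csSup_le' hbound
  · exact le_csSup ⟨I.ncard, hbound⟩ ⟨I, hI.indep, hI.subset, rfl⟩

lemma rnk_disjointSum {α : Type*} (M M' : Matroid α) [M.Finite] [M'.Finite]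
    (hdisj : Disjoint M.E M'.E) (X : Set α) :
    (M.disjointSum M' hdisj).rnk X = M.rnk (X ∩ M.E) + M'.rnk (X ∩ M'.E) := by
  obtain ⟨I, hI⟩ := M.exists_isBasis' (X ∩ M.E)
  obtain ⟨I', hI'⟩ := M'.exists_isBasis' (X ∩ M'.E)
  have hIE : I ⊆ M.E := hI.indep.subset_ground
  have hIE' : I' ⊆ M'.E := hI'.indep.subset_ground
  have hIcapE : (I ∪ I') ∩ M.E = I := by
    rw [Set.union_inter_distrib_right, Set.inter_eq_self_of_subset_left hIE,
      (hdisj.symm.mono_left hIE').inter_eq, Set.union_empty]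
  have hIcapE' : (I ∪ I') ∩ M'.E = I' := by
    rw [Set.union_inter_distrib_right, Set.inter_eq_self_of_subset_left hIE',
      (hdisj.mono_left hIE).inter_eq, Set.empty_union]
  have hB : (M.disjointSum M' hdisj).IsBasis' (I ∪ I') X := by
    constructor
    · refine ⟨disjointSum_indep_iff.2 ⟨?_, ?_, ?_⟩,
        Set.union_subset (hI.subset.trans Set.inter_subset_left)
          (hI'.subset.trans Set.inter_subset_left)⟩
      · rw [hIcapE]; exact hI.indep
      · rw [hIcapE']; exact hI'.indep
      · exact Set.union_subset (hIE.trans Set.subset_union_left)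
          (hIE'.trans Set.subset_union_right)
    · rintro J ⟨hJindep, hJX⟩ hsub
      rw [disjointSum_indep_iff] at hJindep
      obtain ⟨hJ1, hJ2, hJE⟩ := hJindep
      have h1 : J ∩ M.E ⊆ I := hI.2 ⟨hJ1, Set.inter_subset_inter_left _ hJX⟩
        (by rw [← hIcapE]; exact Set.inter_subset_inter_left _ hsub)
      have h2 : J ∩ M'.E ⊆ I' := hI'.2 ⟨hJ2, Set.inter_subset_inter_left _ hJX⟩
        (by rw [← hIcapE']; exact Set.inter_subset_inter_left _ hsub)
      intro x hx
      rcases hJE hx with h | h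
      · exact Set.subset_union_left (h1 ⟨hx, h⟩)
      · exact Set.subset_union_right (h2 ⟨hx, h⟩)
  have hfin : (M.disjointSum M' hdisj).Finite := by
    constructor
    rw [disjointSum_ground_eq]
    exact M.ground_finite.union M'.ground_finite
  rw [(M.disjointSum M' hdisj).rnk_eq_of_basis' hB, M.rnk_eq_of_basis' hI,
    M'.rnk_eq_of_basis' hI',
    Set.ncard_union_eq (hdisj.mono hIE hIE') (M.set_finite I) (M'.set_finite I')]

end Matroid

/-- The Kinser class `K n` is closed under direct sums. -/
theorem Matroid.disjointSum_memKinserClass {α : Type*} {n : ℕ} (hn : 4 ≤ n)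
    (M M' : Matroid α) [M.Finite] [M'.Finite] (hdisj : Disjoint M.E M'.E)
    (hM : M.MemKinserClass n) (hM' : M'.MemKinserClass n) :
    (M.disjointSum M' hdisj).MemKinserClass n := by
  intro X hX
  have h1 := hM (fun i => X i ∩ M.E) (fun i _ => Set.inter_subset_right)
  have h2 := hM' (fun i => X i ∩ M'.E) (fun i _ => Set.inter_subset_right)
  unfold KinserIneq at h1 h2 ⊢
  simp only [rnk_disjointSum, Set.union_inter_distrib_right, Finset.sum_add_distrib]
  simp only [] at h1 h2
  linarith
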